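/- Define h_n by ∑_{n≥0} h_n x^n/(n!)^r = (∑_{n≥0} (-1)^n x^n/(n!)^r)^{-1}. Then each h_n is a nonnegative integer. -/

import Mathlib

namespace Stmt7

/-- `σ` has a descent at position `i` (meaning `σ (i+1) < σ i`). -/
def Desc {n : ℕ} (σ : Equiv.Perm (Fin n)) (i : ℕ) : Prop :=
  ∃ h : i + 1 < n, σ ⟨i + 1, h⟩ < σ ⟨i, Nat.lt_of_succ_lt h⟩

/-- every position `i` with `i+1 < m` is a descent of some coordinate. -/
def Covers {n : ℕ} (r : ℕ) (τ : Fin r → Equiv.Perm (Fin n)) (m : ℕ) : Prop :=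
  ∀ i : ℕ, i + 1 < m → ∃ j : Fin r, Desc (τ j) i

noncomputable def H (r n : ℕ) : ℕ :=
  Nat.card {τ : Fin r → Equiv.Perm (Fin n) // Covers r τ n}

def TailInc {n : ℕ} (k : ℕ) (σ : Equiv.Perm (Fin n)) : Prop :=
  ∀ i : ℕ, ∀ h : i + 1 < n, k ≤ i → σ ⟨i, Nat.lt_of_succ_lt h⟩ < σ ⟨i + 1, h⟩

variable {n k : ℕ}

lemma compl_card (hk : k ≤ n) {A : Finset (Fin n)} (hA : A.card = k) : Aᶜ.card = n - k := by
  rw [Finset.card_compl, hA, Fintype.card_fin]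

/-- standardization: build a permutation of `Fin n` from a `k`-subset `A` and a pattern
`π ∈ S_k`: place the elements of `A` in the first `k` positions in the order given by `π`,
then the rest increasingly. -/
noncomputable def F (hk : k ≤ n) (A : Finset (Fin n)) (hA : A.card = k)
    (π : Equiv.Perm (Fin k)) : Equiv.Perm (Fin n) :=
  (finCongr (Nat.add_sub_cancel' hk).symm).trans <|
    finSumFinEquiv.symm.trans <|
      (Equiv.sumCongr π (Equiv.refl (Fin (n - k)))).trans <|
        (Equiv.sumCongr (A.orderIsoOfFin hA).toEquiv
            ((Aᶜ.orderIsoOfFin (compl_card hk hA)).toEquiv.trans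
              (Equiv.subtypeEquivRight (fun x => Finset.mem_compl)))).trans <|
          Equiv.sumCompl (· ∈ A)

lemma F_apply_lt (hk : k ≤ n) (A : Finset (Fin n)) (hA : A.card = k)
    (π : Equiv.Perm (Fin k)) {i : ℕ} (hi : i < k) (hin : i < n) :
    F hk A hA π ⟨i, hin⟩ = (A.orderIsoOfFin hA (π ⟨i, hi⟩) : Fin n) := by
  have h1 : (finCongr (Nat.add_sub_cancel' hk).symm) ⟨i, hin⟩
      = Fin.castAdd (n - k) ⟨i, hi⟩ := by
    ext; simp
  simp only [F, Equiv.trans_apply, h1, finSumFinEquiv_symm_apply_castAdd,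
    Equiv.sumCongr_apply, Sum.map_inl, Equiv.sumCompl_apply_inl]
  rfl

lemma F_apply_ge (hk : k ≤ n) (A : Finset (Fin n)) (hA : A.card = k)
    (π : Equiv.Perm (Fin k)) {i : ℕ} (hi : k ≤ i) (hin : i < n) :
    F hk A hA π ⟨i, hin⟩
      = ((Aᶜ.orderIsoOfFin (compl_card hk hA) ⟨i - k, by omega⟩ : Fin n)) := by
  have h1 : (finCongr (Nat.add_sub_cancel' hk).symm) ⟨i, hin⟩
      = Fin.natAdd k ⟨i - k, by omega⟩ := by
    ext; simp; omega
  simp only [F, Equiv.trans_apply, h1, finSumFinEquiv_symm_apply_natAdd,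
    Equiv.sumCongr_apply, Sum.map_inr, Equiv.refl_apply, Equiv.sumCompl_apply_inr]
  rfl


lemma F_tailInc (hk : k ≤ n) (A : Finset (Fin n)) (hA : A.card = k)
    (π : Equiv.Perm (Fin k)) : TailInc k (F hk A hA π) := by
  intro i h hki
  rw [F_apply_ge hk A hA π hki (Nat.lt_of_succ_lt h), F_apply_ge hk A hA π (by omega) h]
  have : (⟨i - k, by omega⟩ : Fin (n - k)) < ⟨i + 1 - k, by omega⟩ := by
    simp only [Fin.mk_lt_mk]; omega
  exact_mod_cast (Aᶜ.orderIsoOfFin (compl_card hk hA)).strictMono this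

lemma F_desc (hk : k ≤ n) (A : Finset (Fin n)) (hA : A.card = k)
    (π : Equiv.Perm (Fin k)) {i : ℕ} (hi : i + 1 < k) :
    Desc (F hk A hA π) i ↔ Desc π i := by
  have hin : i + 1 < n := lt_of_lt_of_le hi hk
  constructor
  · rintro ⟨h, hlt⟩
    refine ⟨hi, ?_⟩
    rw [F_apply_lt hk A hA π hi h, F_apply_lt hk A hA π (by omega) (by omega)] at hlt
    exact (A.orderIsoOfFin hA).lt_iff_lt.mp (by exact_mod_cast hlt)
  · rintro ⟨h, hlt⟩
    refine ⟨hin, ?_⟩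
    rw [F_apply_lt hk A hA π hi hin, F_apply_lt hk A hA π (by omega) (by omega)]
    exact_mod_cast (A.orderIsoOfFin hA).lt_iff_lt.mpr hlt

lemma F_mem (hk : k ≤ n) (A : Finset (Fin n)) (hA : A.card = k)
    (π : Equiv.Perm (Fin k)) {i : ℕ} (hi : i < k) (hin : i < n) :
    F hk A hA π ⟨i, hin⟩ ∈ A := by
  rw [F_apply_lt hk A hA π hi hin]
  exact (A.orderIsoOfFin hA _).2

/-- `A` is recovered from `F hk A hA π` as the image of the first `k` positions. -/
lemma F_image (hk : k ≤ n) (A : Finset (Fin n)) (hA : A.card = k)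
    (π : Equiv.Perm (Fin k)) :
    Finset.image (F hk A hA π) (Finset.univ.filter (fun i : Fin n => (i : ℕ) < k)) = A := by
  apply Finset.eq_of_subset_of_card_le
  · intro x hx
    simp only [Finset.mem_image, Finset.mem_filter, Finset.mem_univ, true_and] at hx
    obtain ⟨i, hi, rfl⟩ := hx
    exact F_mem hk A hA π hi i.2
  · rw [hA, Finset.card_image_of_injective _ (F hk A hA π).injective]
    have : Finset.univ.filter (fun i : Fin n => (i : ℕ) < k)
        = Finset.map (Fin.castLEEmb hk) Finset.univ := by
      ext i
      simp only [Finset.mem_filter, Finset.mem_univ, true_and, Finset.mem_map]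
      constructor
      · intro hik; exact ⟨⟨i, hik⟩, by simp [Fin.castLEEmb, Fin.ext_iff]⟩
      · rintro ⟨j, -, rfl⟩; simpa [Fin.castLEEmb] using j.2
    rw [this, Finset.card_map, Finset.card_univ, Fintype.card_fin]

lemma F_injective (hk : k ≤ n) :
    Function.Injective
      (fun p : {A : Finset (Fin n) // A.card = k} × Equiv.Perm (Fin k) =>
        F hk p.1.1 p.1.2 p.2) := by
  rintro ⟨⟨A, hA⟩, π⟩ ⟨⟨B, hB⟩, ρ⟩ hFE
  simp only at hFE
  have hAB : A = B := by rw [← F_image hk A hA π, hFE, F_image hk B hB ρ]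
  subst hAB
  simp only [Prod.mk.injEq, Subtype.mk.injEq, true_and]
  ext i
  have h1 := F_apply_lt hk A hA π i.2 (lt_of_lt_of_le i.2 hk)
  have h2 := F_apply_lt hk A hB ρ i.2 (lt_of_lt_of_le i.2 hk)
  rw [hFE] at h1
  have h3 : ((A.orderIsoOfFin hA (π ⟨(i : ℕ), i.2⟩)) : Fin n)
      = ((A.orderIsoOfFin hB (ρ ⟨(i : ℕ), i.2⟩)) : Fin n) := h1.symm.trans h2
  have h4 : A.orderIsoOfFin hA (π ⟨(i : ℕ), i.2⟩) = A.orderIsoOfFin hA (ρ ⟨(i : ℕ), i.2⟩) := by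
    apply Subtype.ext
    rw [h3]
  have h5 := (A.orderIsoOfFin hA).injective h4
  simp only [Fin.eta] at h5
  exact congrArg Fin.val h5

lemma tailInc_lt {σ : Equiv.Perm (Fin n)} (hσ : TailInc k σ) :
    ∀ b (hb : b < n) a (hab : a < b), k ≤ a → σ ⟨a, by omega⟩ < σ ⟨b, hb⟩ := by
  intro b
  induction b with
  | zero => intro _ a hab; omega
  | succ m ih =>
    intro hb a hab hka
    rcases Nat.lt_or_ge a m with hc | hc
    · exact lt_trans (ih (by omega) a hc hka) (hσ m hb (by omega))
    · have : a = m := by omega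
      subst this
      exact hσ a hb hka

lemma F_surjective (hk : k ≤ n) (σ : Equiv.Perm (Fin n)) (hσ : TailInc k σ) :
    ∃ (A : Finset (Fin n)) (hA : A.card = k) (π : Equiv.Perm (Fin k)),
      F hk A hA π = σ := by
  classical
  set A : Finset (Fin n) := Finset.image σ (Finset.univ.filter fun i : Fin n => (i : ℕ) < k)
    with hAdef
  have hfilter : (Finset.univ.filter fun i : Fin n => (i : ℕ) < k).card = k := by
    have : Finset.univ.filter (fun i : Fin n => (i : ℕ) < k)
        = Finset.map (Fin.castLEEmb hk) Finset.univ := by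
      ext i
      simp only [Finset.mem_filter, Finset.mem_univ, true_and, Finset.mem_map]
      constructor
      · intro hik; exact ⟨⟨i, hik⟩, by simp [Fin.castLEEmb, Fin.ext_iff]⟩
      · rintro ⟨j, -, rfl⟩; simpa [Fin.castLEEmb] using j.2
    rw [this, Finset.card_map, Finset.card_univ, Fintype.card_fin]
  have hA : A.card = k := by
    rw [hAdef, Finset.card_image_of_injective _ σ.injective, hfilter]
  have hmem : ∀ i : Fin k, σ ⟨i, lt_of_lt_of_le i.2 hk⟩ ∈ A := by
    intro i
    simp only [hAdef, Finset.mem_image, Finset.mem_filter, Finset.mem_univ, true_and]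
    exact ⟨⟨i, lt_of_lt_of_le i.2 hk⟩, i.2, rfl⟩
  set π0 : Fin k → Fin k := fun i =>
    (A.orderIsoOfFin hA).symm ⟨σ ⟨i, lt_of_lt_of_le i.2 hk⟩, hmem i⟩ with hπ0
  have hπ0inj : Function.Injective π0 := by
    intro a b hab
    have := (A.orderIsoOfFin hA).symm.injective hab
    have := congrArg (fun x : A => (x : Fin n)) this
    simp only at this
    have := σ.injective this
    exact Fin.ext (by simpa [Fin.ext_iff] using this)
  set π : Equiv.Perm (Fin k) := Equiv.ofBijective π0 (Finite.injective_iff_bijective.mp hπ0inj)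
  refine ⟨A, hA, π, ?_⟩
  -- the tail of σ is the increasing enumeration of Aᶜ
  have htail : ∀ (j : Fin (n - k)),
      σ ⟨k + j, by omega⟩ = (Aᶜ.orderIsoOfFin (compl_card hk hA) j : Fin n) := by
    set f : Fin (n - k) → Fin n := fun j => σ ⟨k + j, by omega⟩ with hf
    have hfmem : ∀ j, f j ∈ Aᶜ := by
      intro j
      simp only [hf, Finset.mem_compl, hAdef, Finset.mem_image, Finset.mem_filter,
        Finset.mem_univ, true_and]
      rintro ⟨i, hik, hi⟩
      have := σ.injective hi
      simp only [Fin.ext_iff] at this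
      omega
    have hfmono : StrictMono f := by
      intro a b hab
      have := tailInc_lt hσ (k + (b : ℕ)) (by omega) (k + (a : ℕ)) (by simpa using hab)
        (by omega)
      simpa [hf] using this
    have := Finset.orderEmbOfFin_unique (compl_card hk hA) (f := f) hfmem hfmono
    intro j
    rw [show σ ⟨k + (j : ℕ), by omega⟩ = f j from rfl, this,
      Finset.coe_orderIsoOfFin_apply]
  ext i
  rcases lt_or_ge (i : ℕ) k with hik | hik
  · rw [show i = (⟨(i : ℕ), i.2⟩ : Fin n) from rfl, F_apply_lt hk A hA π hik i.2]
    simp only [π, Equiv.ofBijective_apply, π0, hπ0, OrderIso.apply_symm_apply]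
  · rw [show i = (⟨(i : ℕ), i.2⟩ : Fin n) from rfl, F_apply_ge hk A hA π hik i.2]
    have h5 : (⟨(i : ℕ), i.2⟩ : Fin n) = ⟨k + ((i : ℕ) - k), by omega⟩ := by
      apply Fin.ext; simp; omega
    rw [h5]
    exact congrArg Fin.val (htail ⟨(i : ℕ) - k, by omega⟩).symm

lemma card_M (r : ℕ) (hk : k ≤ n) :
    Nat.card {τ : Fin r → Equiv.Perm (Fin n) //
        (∀ j, TailInc k (τ j)) ∧ Covers r τ k}
      = (n.choose k) ^ r * H r k := by
  classical
  set f : ((Fin r → {A : Finset (Fin n) // A.card = k})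
      × {q : Fin r → Equiv.Perm (Fin k) // Covers r q k})
      → {τ : Fin r → Equiv.Perm (Fin n) // (∀ j, TailInc k (τ j)) ∧ Covers r τ k} :=
    fun p => ⟨fun j => F hk (p.1 j).1 (p.1 j).2 (p.2.1 j),
      fun j => F_tailInc hk _ _ _,
      fun i hi => by
        obtain ⟨j, hj⟩ := p.2.2 i hi
        exact ⟨j, (F_desc hk _ _ _ hi).mpr hj⟩⟩ with hfdef
  have hbij : Function.Bijective f := by
    constructor
    · rintro ⟨a, q, hq⟩ ⟨b, s, hs⟩ hab
      simp only [hfdef, Subtype.mk.injEq] at hab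
      have hj : ∀ j, ((a j, q j)
          : {A : Finset (Fin n) // A.card = k} × Equiv.Perm (Fin k)) = (b j, s j) :=
        fun j => F_injective hk (congrFun hab j)
      obtain rfl : a = b := funext fun j => congrArg Prod.fst (hj j)
      obtain rfl : q = s := funext fun j => congrArg Prod.snd (hj j)
      rfl
    · rintro ⟨τ, h1, h2⟩
      choose A hA π hπ using fun j => F_surjective hk (τ j) (h1 j)
      refine ⟨⟨fun j => ⟨A j, hA j⟩, ⟨π, ?_⟩⟩, ?_⟩
      · intro i hi
        obtain ⟨j, hj⟩ := h2 i hi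
        rw [← hπ j] at hj
        exact ⟨j, (F_desc hk _ _ _ hi).mp hj⟩
      · exact Subtype.ext (funext fun j => hπ j)
  have := Nat.card_eq_of_bijective f hbij
  rw [← this, Nat.card_prod, Nat.card_pi]
  have h1 : Nat.card {A : Finset (Fin n) // A.card = k} = n.choose k := by
    rw [Nat.card_eq_fintype_card, Fintype.card_finset_len, Fintype.card_fin]
  simp only [h1, Finset.prod_const, Finset.card_univ, Fintype.card_fin, H]

/-- number of `r`-tuples whose covered set is exactly `{0, ..., j-1}` (0 if `j ≥ n`). -/
noncomputable def N (r n j : ℕ) : ℕ :=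
  if j < n then
    Nat.card {τ : Fin r → Equiv.Perm (Fin n) //
      ∀ i : ℕ, i + 1 < n → ((∃ jj : Fin r, Desc (τ jj) i) ↔ i < j)}
  else 0

lemma not_desc_of_tailInc {σ : Equiv.Perm (Fin n)} (hσ : TailInc k σ) {i : ℕ}
    (hi : k ≤ i) : ¬ Desc σ i := by
  rintro ⟨hin, hlt⟩
  exact absurd (hσ i hin hi) (not_lt.mpr hlt.le)

lemma tailInc_of_not_desc {σ : Equiv.Perm (Fin n)} (hσ : ∀ i, k ≤ i → ¬ Desc σ i) :
    TailInc k σ := by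
  intro i hin hki
  by_contra hc
  have : σ ⟨i + 1, hin⟩ < σ ⟨i, Nat.lt_of_succ_lt hin⟩ ∨
      σ ⟨i + 1, hin⟩ = σ ⟨i, Nat.lt_of_succ_lt hin⟩ := by
    rcases lt_trichotomy (σ ⟨i + 1, hin⟩) (σ ⟨i, Nat.lt_of_succ_lt hin⟩) with h | h | h
    · exact Or.inl h
    · exact Or.inr h
    · exact absurd h hc
  rcases this with h | h
  · exact hσ i hki ⟨hin, h⟩
  · have := σ.injective h
    simp [Fin.ext_iff] at this

lemma M_eq_N (r : ℕ) (m : ℕ) (hm : m + 1 ≤ n) :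
    Nat.card {τ : Fin r → Equiv.Perm (Fin n) //
        (∀ j, TailInc (m + 1) (τ j)) ∧ Covers r τ (m + 1)}
      = N r n m + N r n (m + 1) := by
  classical
  rcases eq_or_lt_of_le hm with heq | hlt
  · -- m + 1 = n : the predicate is equivalent to "covered exactly below m", N (m+1) = 0
    have hiff : ∀ τ : Fin r → Equiv.Perm (Fin n),
        ((∀ j, TailInc (m + 1) (τ j)) ∧ Covers r τ (m + 1)) ↔
          (∀ i : ℕ, i + 1 < n → ((∃ jj : Fin r, Desc (τ jj) i) ↔ i < m)) := by
      intro τ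
      constructor
      · rintro ⟨h1, h2⟩ i hi
        constructor
        · rintro ⟨jj, hd⟩
          by_contra hc
          exact not_desc_of_tailInc (h1 jj) (by omega) hd
        · intro him
          exact h2 i (by omega)
      · intro hiff
        constructor
        · intro j
          apply tailInc_of_not_desc
          intro i hi hd
          have := (hiff i hd.1).mp ⟨j, hd⟩
          omega
        · intro i hi
          exact (hiff i (by omega)).mpr (by omega)
    rw [N, N, if_pos (by omega), if_neg (by omega), add_zero]
    exact Nat.card_congr (Equiv.subtypeEquivRight hiff)
  · -- m + 1 < n
    have hiff : ∀ τ : Fin r → Equiv.Perm (Fin n),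
        ((∀ j, TailInc (m + 1) (τ j)) ∧ Covers r τ (m + 1)) ↔
          ((∀ i : ℕ, i + 1 < n → ((∃ jj : Fin r, Desc (τ jj) i) ↔ i < m)) ∨
           (∀ i : ℕ, i + 1 < n → ((∃ jj : Fin r, Desc (τ jj) i) ↔ i < m + 1))) := by
      intro τ
      constructor
      · rintro ⟨h1, h2⟩
        by_cases hc : ∃ jj : Fin r, Desc (τ jj) m
        · right
          intro i hi
          constructor
          · rintro ⟨jj, hd⟩
            by_contra hcc
            exact not_desc_of_tailInc (h1 jj) (by omega) hd
          · intro him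
            rcases Nat.lt_or_ge i m with h | h
            · exact h2 i (by omega)
            · have : i = m := by omega
              subst this; exact hc
        · left
          intro i hi
          constructor
          · rintro ⟨jj, hd⟩
            by_contra hcc
            rcases Nat.lt_or_ge i (m + 1) with h | h
            · have : i = m := by omega
              subst this; exact hc ⟨jj, hd⟩
            · exact not_desc_of_tailInc (h1 jj) h hd
          · intro him
            exact h2 i (by omega)
      · intro hor
        have key : ∀ b : ℕ, (∀ i : ℕ, i + 1 < n → ((∃ jj : Fin r, Desc (τ jj) i) ↔ i < b))
            → m ≤ b → b ≤ m + 1 → (∀ j, TailInc (m + 1) (τ j)) ∧ Covers r τ (m + 1) := by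
          intro b hb hmb hbm
          constructor
          · intro j
            apply tailInc_of_not_desc
            intro i hi hd
            have := (hb i hd.1).mp ⟨j, hd⟩
            omega
          · intro i hi
            exact (hb i (by omega)).mpr (by omega)
        rcases hor with hco | hco
        · exact key m hco le_rfl (by omega)
        · exact key (m + 1) hco (by omega) le_rfl
    have hdisj : ∀ τ : Fin r → Equiv.Perm (Fin n),
        ¬ ((∀ i : ℕ, i + 1 < n → ((∃ jj : Fin r, Desc (τ jj) i) ↔ i < m)) ∧
           (∀ i : ℕ, i + 1 < n → ((∃ jj : Fin r, Desc (τ jj) i) ↔ i < m + 1))) := by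
      rintro τ ⟨ha, hb⟩
      have h1 := (ha m (by omega))
      have h2 := (hb m (by omega))
      rw [h2] at h1
      omega
    rw [N, N, if_pos (by omega), if_pos (by omega)]
    rw [Nat.card_congr (Equiv.subtypeEquivRight hiff)]
    classical
    have hd : Disjoint
        (fun τ : Fin r → Equiv.Perm (Fin n) =>
          ∀ i : ℕ, i + 1 < n → ((∃ jj : Fin r, Desc (τ jj) i) ↔ i < m))
        (fun τ : Fin r → Equiv.Perm (Fin n) =>
          ∀ i : ℕ, i + 1 < n → ((∃ jj : Fin r, Desc (τ jj) i) ↔ i < m + 1)) := by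
      intro R h1 h2 τ hτ
      exact absurd ⟨h1 τ hτ, h2 τ hτ⟩ (hdisj τ)
    rw [Nat.card_congr (subtypeOrEquiv _ _ hd), Nat.card_sum]

lemma M_zero_eq_N (r : ℕ) (hn : 1 ≤ n) :
    Nat.card {τ : Fin r → Equiv.Perm (Fin n) //
        (∀ j, TailInc 0 (τ j)) ∧ Covers r τ 0} = N r n 0 := by
  have hiff : ∀ τ : Fin r → Equiv.Perm (Fin n),
      ((∀ j, TailInc 0 (τ j)) ∧ Covers r τ 0) ↔
        (∀ i : ℕ, i + 1 < n → ((∃ jj : Fin r, Desc (τ jj) i) ↔ i < 0)) := by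
    intro τ
    constructor
    · rintro ⟨h1, -⟩ i hi
      simp only [Nat.not_lt_zero, iff_false, not_exists]
      intro jj
      exact not_desc_of_tailInc (h1 jj) (Nat.zero_le i)
    · intro hiff
      refine ⟨fun j => tailInc_of_not_desc fun i hi hd => ?_, fun i hi => by omega⟩
      have := (hiff i hd.1).mp ⟨j, hd⟩
      omega
  rw [N, if_pos (by omega)]
  exact Nat.card_congr (Equiv.subtypeEquivRight hiff)

lemma H_zero (r : ℕ) : H r 0 = 1 := by
  rw [H, Nat.card_eq_one_iff_unique]
  constructor
  · constructor
    rintro ⟨τ, hτ⟩ ⟨τ', hτ'⟩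
    apply Subtype.ext
    funext j
    apply Equiv.ext
    intro x
    exact x.elim0
  · exact ⟨⟨fun _ => 1, fun i hi => by omega⟩⟩

/-- the key alternating-sum identity. -/
lemma keyD (r n : ℕ) :
    ∑ k ∈ Finset.range (n + 1), (-1 : ℤ) ^ (n - k) * ((n.choose k) ^ r * H r k : ℕ)
      = if n = 0 then 1 else 0 := by
  rcases Nat.eq_zero_or_pos n with rfl | hn
  · simp [H_zero]
  rw [if_neg (by omega)]
  -- replace each term by N-values
  have hM : ∀ k, k ≤ n → ((n.choose k) ^ r * H r k : ℤ)
      = if k = 0 then (N r n 0 : ℤ) else (N r n (k - 1) : ℤ) + N r n k := by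
    intro k hk
    rcases Nat.eq_zero_or_pos k with rfl | hkpos
    · rw [if_pos rfl]
      exact_mod_cast (card_M r (Nat.zero_le n)).symm.trans (M_zero_eq_N r hn)
    · obtain ⟨m, rfl⟩ : ∃ m, k = m + 1 := ⟨k - 1, by omega⟩
      rw [if_neg (by omega)]
      exact_mod_cast (card_M r hk).symm.trans (M_eq_N r m hk)
  have hsum : ∑ k ∈ Finset.range (n + 1),
        (-1 : ℤ) ^ (n - k) * ((n.choose k) ^ r * H r k : ℕ)
      = (∑ i ∈ Finset.range n,
          (-1 : ℤ) ^ (n - (i + 1)) * ((N r n i : ℤ) + N r n (i + 1)))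
        + (-1) ^ n * N r n 0 := by
    rw [Finset.sum_range_succ']
    congr 1
    · apply Finset.sum_congr rfl
      intro i hi
      have hin := Finset.mem_range.mp hi
      push_cast
      rw [hM (i + 1) (by omega), if_neg (by omega)]
      norm_num
    · push_cast
      rw [hM 0 (by omega), if_pos rfl, Nat.sub_zero]
  set G : ℕ → ℤ := fun i => (-1 : ℤ) ^ (n - i) * N r n i with hG
  have hstep : ∀ i ∈ Finset.range n,
      (-1 : ℤ) ^ (n - (i + 1)) * ((N r n i : ℤ) + N r n (i + 1)) = G (i + 1) - G i := by
    intro i hi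
    have hin := Finset.mem_range.mp hi
    simp only [hG]
    have h1 : n - i = (n - (i + 1)) + 1 := by omega
    rw [h1, pow_succ]
    ring
  rw [hsum, Finset.sum_congr rfl hstep, Finset.sum_range_sub G]
  have hgn : G n = 0 := by
    simp [hG, N]
  have hg0 : G 0 = (-1 : ℤ) ^ n * N r n 0 := by simp [hG]
  rw [hgn, hg0]
  ring

lemma series_identity (r : ℕ) :
    (PowerSeries.mk fun m => (H r m : ℚ) / ((Nat.factorial m : ℚ)) ^ r) *
      (PowerSeries.mk fun m => (-1 : ℚ) ^ m / ((Nat.factorial m : ℚ)) ^ r) = 1 := by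
  ext nn
  rw [PowerSeries.coeff_mul, Finset.Nat.sum_antidiagonal_eq_sum_range_succ_mk]
  simp only [PowerSeries.coeff_mk]
  have keyDQ : (∑ k ∈ Finset.range (nn + 1),
      (-1 : ℚ) ^ (nn - k) * (((nn.choose k) ^ r * H r k : ℕ) : ℚ))
      = if nn = 0 then 1 else 0 := by
    have := keyD r nn
    have hc := congrArg (Int.cast : ℤ → ℚ) this
    push_cast at hc ⊢
    rw [hc]
  have hterm : ∀ k ∈ Finset.range (nn + 1),
      (H r k : ℚ) / ((k.factorial : ℚ)) ^ r *
          ((-1) ^ (nn - k) / (((nn - k).factorial : ℚ)) ^ r)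
        = ((-1 : ℚ) ^ (nn - k) * (((nn.choose k) ^ r * H r k : ℕ) : ℚ))
            / ((nn.factorial : ℚ)) ^ r := by
    intro k hk
    have hkn : k ≤ nn := by have := Finset.mem_range.mp hk; omega
    have h1 : ((nn.factorial : ℚ)) ^ r
        = (nn.choose k : ℚ) ^ r * ((k.factorial : ℚ)) ^ r * (((nn - k).factorial : ℚ)) ^ r := by
      rw [← mul_pow, ← mul_pow]
      congr 1
      exact_mod_cast (Nat.choose_mul_factorial_mul_factorial hkn).symm
    have hch : (nn.choose k : ℚ) ≠ 0 := Nat.cast_ne_zero.mpr (Nat.choose_pos hkn).ne'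
    have hf1 : ((k.factorial : ℚ)) ≠ 0 := Nat.cast_ne_zero.mpr k.factorial_ne_zero
    have hf2 : (((nn - k).factorial : ℚ)) ≠ 0 := Nat.cast_ne_zero.mpr (nn - k).factorial_ne_zero
    rw [h1]
    push_cast
    field_simp
  rw [Finset.sum_congr rfl hterm, ← Finset.sum_div, keyDQ, PowerSeries.coeff_one]
  split_ifs with hnn
  · subst hnn
    simp [Nat.factorial]
  · simp

end Stmt7



open PowerSeries

/-- Fix `r ≥ 1`. If `∑_{n≥0} h_n x^n/(n!)^r = (∑_{n≥0} (-1)^n x^n/(n!)^r)⁻¹` as formal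
power series over `ℚ` (i.e. the product of the two series is `1`), then each `h_n`
is a nonnegative integer. -/
theorem stmt_7 (r : ℕ) (hr : 1 ≤ r) (h : ℕ → ℚ)
    (hh : (PowerSeries.mk fun n => h n / ((Nat.factorial n : ℚ)) ^ r) *
      (PowerSeries.mk fun n => (-1 : ℚ) ^ n / ((Nat.factorial n : ℚ)) ^ r) = 1) :
    ∀ n : ℕ, ∃ m : ℕ, h n = (m : ℚ) := by
  intro n
  refine ⟨Stmt7.H r n, ?_⟩
  set P := PowerSeries.mk fun m => h m / ((Nat.factorial m : ℚ)) ^ r with hP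
  set Q := PowerSeries.mk fun m => (Stmt7.H r m : ℚ) / ((Nat.factorial m : ℚ)) ^ r with hQ
  set g := PowerSeries.mk fun m => (-1 : ℚ) ^ m / ((Nat.factorial m : ℚ)) ^ r with hg
  have hq : Q * g = 1 := Stmt7.series_identity r
  have hPQ : P = Q := by
    have h1 : P * (Q * g) = P := by rw [hq, mul_one]
    have h2 : P * (Q * g) = Q * (P * g) := by ring
    rw [h2, hh, mul_one] at h1
    exact h1.symm
  have hco := congrArg (PowerSeries.coeff n) hPQ
  simp only [hP, hQ, PowerSeries.coeff_mk] at hco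
  have hf : ((n.factorial : ℚ)) ^ r ≠ 0 :=
    pow_ne_zero _ (Nat.cast_ne_zero.mpr n.factorial_ne_zero)
  field_simp at hco
  exact hco
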